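/- Let p be a prime, e ≥ 1, r : {1,…,e} → ℕ nonincreasing with r_e ≥ 1, and α = (1 + ∑_{i=1}^e r_i w_i(p^e))/p^e. For k ≥ 2 and integers 1 ≤ l_1,…,l_k ≤ p^e − 1, define ε(l_1,…,l_k) = α − (1 + ∑_{i=1}^e r_i (w_i(l_1)+⋯+w_i(l_k)))/(l_1+⋯+l_k). Then ε(l_1,…,l_k) > 1/(2p^e). -/

import Mathlib

/-- `w p i m = ⌊(m-1)/p^(i-1)⌋ - ⌊(m-1)/p^i⌋` (natural floor division). -/
def w (p i m : ℕ) : ℕ := (m - 1) / p ^ (i - 1) - (m - 1) / p ^ i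

lemma telescope (p l : ℕ) (hp : 1 ≤ p) (t : ℕ) :
    ∑ i ∈ Finset.Icc 1 t, w p i l = (l - 1) - (l - 1) / p ^ t := by
  induction t with
  | zero => simp
  | succ t ih =>
    rw [Finset.sum_Icc_succ_top (by omega : 1 ≤ t + 1), ih]
    have h1 : (l - 1) / p ^ (t + 1) ≤ (l - 1) / p ^ t :=
      Nat.div_le_div_left (Nat.pow_le_pow_right hp (by omega)) (Nat.pow_pos (n := t) hp)
    have h2 : (l - 1) / p ^ t ≤ l - 1 := Nat.div_le_self _ _
    have hw : w p (t + 1) l = (l - 1) / p ^ t - (l - 1) / p ^ (t + 1) := by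
      simp only [w, Nat.add_sub_cancel]
    rw [hw]
    generalize (l - 1) / p ^ t = x at *
    generalize (l - 1) / p ^ (t + 1) = y at *
    omega

/-- the difference sequence of `r` -/
def dd (e : ℕ) (r : ℕ → ℕ) (t : ℕ) : ℕ := if t = e then r e else r t - r (t + 1)

lemma rsum (e : ℕ) (r : ℕ → ℕ) (hmono : ∀ i, 1 ≤ i → i < e → r (i + 1) ≤ r i) :
    ∀ n i, 1 ≤ i → i ≤ e → e - i = n → r i = ∑ t ∈ Finset.Icc i e, dd e r t := by
  intro n
  induction n with
  | zero =>
    intro i hi1 hie hn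
    have : i = e := by omega
    subst this
    simp [dd]
  | succ n ih =>
    intro i hi1 hie hn
    have hlt : i < e := by omega
    have hins : Finset.Icc i e = insert i (Finset.Icc (i + 1) e) := by
      ext x; simp only [Finset.mem_Icc, Finset.mem_insert]; omega
    rw [hins, Finset.sum_insert (by simp only [Finset.mem_Icc]; omega)]
    rw [← ih (i + 1) (by omega) (by omega) (by omega)]
    have := hmono i hi1 hlt
    simp only [dd, if_neg (by omega : i ≠ e)]
    omega

lemma abel (p e l : ℕ) (hp : 1 ≤ p) (r : ℕ → ℕ)
    (hmono : ∀ i, 1 ≤ i → i < e → r (i + 1) ≤ r i) :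
    ∑ i ∈ Finset.Icc 1 e, r i * w p i l
      = ∑ t ∈ Finset.Icc 1 e, dd e r t * ((l - 1) - (l - 1) / p ^ t) := by
  have step1 : ∑ i ∈ Finset.Icc 1 e, r i * w p i l
      = ∑ i ∈ Finset.Icc 1 e, ∑ t ∈ Finset.Icc 1 e,
          (if i ≤ t then dd e r t * w p i l else 0) := by
    refine Finset.sum_congr rfl fun i hi => ?_
    rw [Finset.mem_Icc] at hi
    rw [rsum e r hmono (e - i) i hi.1 hi.2 rfl, Finset.sum_mul]
    rw [← Finset.sum_filter]
    have hfil : Finset.Icc i e = (Finset.Icc 1 e).filter (fun t => i ≤ t) := by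
      ext t; simp only [Finset.mem_Icc, Finset.mem_filter]; omega
    rw [hfil]
  rw [step1, Finset.sum_comm]
  refine Finset.sum_congr rfl fun t ht => ?_
  rw [Finset.mem_Icc] at ht
  rw [← telescope p l hp t, Finset.mul_sum]
  rw [← Finset.sum_filter]
  have hfil : Finset.Icc 1 t = (Finset.Icc 1 e).filter (fun i => i ≤ t) := by
    ext i; simp only [Finset.mem_Icc, Finset.mem_filter]; omega
  rw [hfil]

lemma perterm (p e t m : ℕ) (hp : 1 ≤ p) (hte : t ≤ e) :
    (m + 1) * (p ^ e - p ^ (e - t))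
      = p ^ e * (m - m / p ^ t) + p ^ (e - t) * (p ^ t - 1 - m % p ^ t) := by
  have hpt : 0 < p ^ t := Nat.pow_pos (n := t) hp
  have hpe : p ^ e = p ^ (e - t) * p ^ t := by
    rw [← pow_add]; congr 1; omega
  obtain ⟨q, s, hqs, hs⟩ : ∃ q s, m = p ^ t * q + s ∧ s < p ^ t :=
    ⟨m / p ^ t, m % p ^ t, (Nat.div_add_mod m (p ^ t)).symm ▸ by omega, Nat.mod_lt _ hpt⟩
  have hdiv : m / p ^ t = q := by
    rw [hqs]; rw [Nat.mul_add_div hpt, Nat.div_eq_of_lt hs]; omega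
  have hmod : m % p ^ t = s := by
    rw [hqs, Nat.mul_add_mod, Nat.mod_eq_of_lt hs]
  rw [hdiv, hmod, hpe, hqs]
  set A := p ^ (e - t) with hA'
  set B := p ^ t with hB'
  have hq : q ≤ B * q + s := by nlinarith
  have hA : A ≤ A * B := by nlinarith
  have hB1 : 1 ≤ B := hpt
  have hs' : s ≤ B - 1 := by omega
  zify [hq, hA, hs', hB1]
  ring

lemma key (p e : ℕ) (hp : 2 ≤ p) (he : 1 ≤ e) (r : ℕ → ℕ)
    (hmono : ∀ i, 1 ≤ i → i < e → r (i + 1) ≤ r i) (hre : 1 ≤ r e)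
    (l : ℕ) (hl1 : 1 ≤ l) (hl2 : l ≤ p ^ e) :
    p ^ e * (1 + ∑ i ∈ Finset.Icc 1 e, r i * w p i l)
      ≤ l * (1 + ∑ i ∈ Finset.Icc 1 e, r i * w p i (p ^ e)) := by
  have hp1 : 1 ≤ p := by omega
  set m := l - 1 with hm
  have hlm : l = m + 1 := by omega
  have hme : m < p ^ e := by omega
  rw [abel p e l hp1 r hmono, abel p e (p ^ e) hp1 r hmono]
  have hPe : 1 ≤ p ^ e := Nat.one_le_pow _ _ (by omega)
  -- simplify the RHS sum terms
  have hrhs : ∀ t ∈ Finset.Icc 1 e,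
      dd e r t * ((p ^ e - 1) - (p ^ e - 1) / p ^ t) = dd e r t * (p ^ e - p ^ (e - t)) := by
    intro t ht
    rw [Finset.mem_Icc] at ht
    congr 1
    have hpt : 0 < p ^ t := Nat.pow_pos (n := t) hp1
    have hpe : p ^ e = p ^ (e - t) * p ^ t := by rw [← pow_add]; congr 1; omega
    have hAe : 1 ≤ p ^ (e - t) := Nat.one_le_pow _ _ (by omega)
    have hle : p ^ (e - t) ≤ p ^ e := Nat.pow_le_pow_right hp1 (by omega)
    have hptle : p ^ t ≤ p ^ e := Nat.pow_le_pow_right hp1 ht.2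
    have hdiv : (p ^ e - 1) / p ^ t = p ^ (e - t) - 1 := by
      have hxy : p ^ t * (p ^ (e - t) - 1) = p ^ e - p ^ t := by
        zify [hAe, hptle]
        have hpez : (p:ℤ) ^ e = (p:ℤ) ^ (e - t) * (p:ℤ) ^ t := by
          rw [← pow_add]; congr 1; omega
        rw [hpez]; ring
      have h1 : p ^ e - 1 = p ^ t * (p ^ (e - t) - 1) + (p ^ t - 1) := by omega
      rw [h1, Nat.mul_add_div hpt, Nat.div_eq_of_lt (by omega)]
      omega
    rw [hdiv]
    omega
  rw [Finset.sum_congr rfl hrhs]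
  simp only [← hm]
  -- per-term bounds with extra term
  have hbound : ∀ t ∈ Finset.Icc 1 e,
      p ^ e * (dd e r t * (m - m / p ^ t)) + (if t = e then p ^ e - 1 - m else 0)
        ≤ (m + 1) * (dd e r t * (p ^ e - p ^ (e - t))) := by
    intro t ht
    rw [Finset.mem_Icc] at ht
    have hid := perterm p e t m hp1 ht.2
    by_cases hte : t = e
    · subst hte
      have h0 : m / p ^ t = 0 := Nat.div_eq_of_lt hme
      have h1 : m % p ^ t = m := Nat.mod_eq_of_lt hme
      rw [h0, h1, Nat.sub_zero] at hid
      rw [if_pos rfl, h0, Nat.sub_zero]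
      have hd : 1 ≤ dd t r t := by simpa [dd] using hre
      set D := dd t r t
      set a := p ^ t * m with ha
      set b := p ^ t - 1 - m with hb
      set c := p ^ t - p ^ (t - t) with hc
      -- hid : (m + 1) * c = a + p^(t-t) * b ; note p^(t-t) = p^0 = 1
      have h00 : p ^ (t - t) = 1 := by rw [Nat.sub_self, pow_zero]
      rw [h00, one_mul] at hid
      calc p ^ t * (D * m) + b = D * a + b := by rw [ha]; ring
        _ ≤ D * a + D * b := by
            have : b ≤ D * b := Nat.le_mul_of_pos_left b (by omega)
            omega
        _ = D * (a + b) := by ring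
        _ = D * ((m + 1) * c) := by rw [hid]
        _ = (m + 1) * (D * c) := by ring
    · rw [if_neg hte]
      calc p ^ e * (dd e r t * (m - m / p ^ t)) + 0
          = dd e r t * (p ^ e * (m - m / p ^ t)) := by ring
        _ ≤ dd e r t * ((m + 1) * (p ^ e - p ^ (e - t))) := by
            apply Nat.mul_le_mul_left
            omega
        _ = (m + 1) * (dd e r t * (p ^ e - p ^ (e - t))) := by ring
  have hif : ∑ t ∈ Finset.Icc 1 e, (if t = e then p ^ e - 1 - m else 0) = p ^ e - 1 - m := by
    rw [Finset.sum_ite_eq' (Finset.Icc 1 e) e]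
    simp [Finset.mem_Icc, he]
  have hsum2 : p ^ e * (∑ t ∈ Finset.Icc 1 e, dd e r t * (m - m / p ^ t)) + (p ^ e - 1 - m)
      ≤ (m + 1) * ∑ t ∈ Finset.Icc 1 e, dd e r t * (p ^ e - p ^ (e - t)) := by
    have h := Finset.sum_le_sum hbound
    rwa [Finset.sum_add_distrib, hif, ← Finset.mul_sum, ← Finset.mul_sum] at h
  rw [hlm, mul_add, mul_add, mul_one, mul_one]
  omega

theorem stmt7 (p e : ℕ) (hp : p.Prime) (he : 1 ≤ e) (r : ℕ → ℕ)
    (hmono : ∀ i, 1 ≤ i → i < e → r (i + 1) ≤ r i) (hre : 1 ≤ r e)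
    (k : ℕ) (hk : 2 ≤ k) (l : Fin k → ℕ)
    (hl1 : ∀ j, 1 ≤ l j) (hl2 : ∀ j, l j ≤ p ^ e - 1) :
    (1 + ∑ i ∈ Finset.Icc 1 e, (r i : ℚ) * (w p i (p ^ e) : ℚ)) / (p : ℚ) ^ e
      - (1 + ∑ i ∈ Finset.Icc 1 e, (r i : ℚ) * ∑ j, (w p i (l j) : ℚ)) / (∑ j, (l j : ℚ))
      > 1 / (2 * (p : ℚ) ^ e) := by
  have hp2 : 2 ≤ p := hp.two_le
  have hPe2 : 2 ≤ p ^ e := by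
    have : 1 < p ^ e := Nat.one_lt_pow (by omega) (by omega)
    omega
  set S := ∑ j, l j with hS
  set W := ∑ i ∈ Finset.Icc 1 e, r i * w p i (p ^ e) with hW
  set T := ∑ i ∈ Finset.Icc 1 e, r i * ∑ j, w p i (l j) with hT
  have hSk : k ≤ S := by
    calc k = ∑ _j : Fin k, 1 := by simp
      _ ≤ S := Finset.sum_le_sum fun j _ => hl1 j
  have hSk2 : S ≤ k * (p ^ e - 1) := by
    calc S ≤ ∑ _j : Fin k, (p ^ e - 1) := Finset.sum_le_sum fun j _ => hl2 j
      _ = k * (p ^ e - 1) := by simp [Finset.card_univ, mul_comm]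
  have hmain : p ^ e * (k + T) ≤ S * (1 + W) := by
    have hkey : ∀ j : Fin k,
        p ^ e * (1 + ∑ i ∈ Finset.Icc 1 e, r i * w p i (l j)) ≤ l j * (1 + W) :=
      fun j => key p e hp2 he r hmono hre (l j) (hl1 j) (by have := hl2 j; omega)
    have hswap : ∑ j : Fin k, ∑ i ∈ Finset.Icc 1 e, r i * w p i (l j) = T := by
      rw [Finset.sum_comm, hT]
      exact Finset.sum_congr rfl fun i _ => by rw [← Finset.mul_sum]
    calc p ^ e * (k + T)
        = ∑ j : Fin k, p ^ e * (1 + ∑ i ∈ Finset.Icc 1 e, r i * w p i (l j)) := by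
          rw [← Finset.mul_sum, Finset.sum_add_distrib, hswap]
          simp [Finset.card_univ]
      _ ≤ ∑ j : Fin k, l j * (1 + W) := Finset.sum_le_sum fun j _ => hkey j
      _ = S * (1 + W) := by rw [← Finset.sum_mul]
  -- pass to rationals
  have e1 : (1 + ∑ i ∈ Finset.Icc 1 e, (r i : ℚ) * (w p i (p ^ e) : ℚ))
      = (1 : ℚ) + (W : ℚ) := by rw [hW]; push_cast; ring
  have e2 : (1 + ∑ i ∈ Finset.Icc 1 e, (r i : ℚ) * ∑ j, (w p i (l j) : ℚ))
      = (1 : ℚ) + (T : ℚ) := by rw [hT]; push_cast; ring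
  have e3 : (∑ j, ((l j : ℚ))) = (S : ℚ) := by rw [hS]; push_cast; ring
  rw [gt_iff_lt, e1, e2, e3]
  have hP2 : (2:ℚ) ≤ ((p : ℚ) ^ e) := by exact_mod_cast hPe2
  have hK2 : (2:ℚ) ≤ (k : ℚ) := by exact_mod_cast hk
  have hsK : (k : ℚ) ≤ (S : ℚ) := by exact_mod_cast hSk
  have hs2 : (S : ℚ) ≤ (k : ℚ) * (((p : ℚ) ^ e) - 1) := by
    have h := (Nat.cast_le (α := ℚ)).2 hSk2
    push_cast [Nat.cast_sub (show 1 ≤ p ^ e by omega)] at h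
    linarith
  have hmq : ((p : ℚ) ^ e) * ((k : ℚ) + (T : ℚ)) ≤ (1 + (W : ℚ)) * (S : ℚ) := by
    have h := (Nat.cast_le (α := ℚ)).2 hmain
    push_cast at h
    nlinarith [h]
  have hP0 : (0:ℚ) < ((p : ℚ) ^ e) := by linarith
  have hs0 : (0:ℚ) < (S : ℚ) := by linarith
  rw [div_sub_div _ _ hP0.ne' hs0.ne', div_lt_div_iff₀ (by positivity) (by positivity)]
  set P : ℚ := ((p : ℚ) ^ e)
  set s : ℚ := (S : ℚ)
  set K : ℚ := (k : ℚ)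
  set Tq : ℚ := (T : ℚ)
  set Wq : ℚ := (W : ℚ)
  have h1 : P * (K - 1) ≤ (1 + Wq) * s - P * (1 + Tq) := by nlinarith [hmq]
  have h2 : P * s ≤ P * (K * (P - 1)) := mul_le_mul_of_nonneg_left hs2 hP0.le
  have h3 : P * (K * (P - 1)) < 2 * P * (P * (K - 1)) := by
    nlinarith [mul_nonneg (mul_nonneg hP0.le hP0.le) (by linarith : (0:ℚ) ≤ K - 2),
      mul_pos hP0 (by linarith : (0:ℚ) < K)]
  have h4 : 2 * P * (P * (K - 1)) ≤ ((1 + Wq) * s - P * (1 + Tq)) * (2 * P) := by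
    nlinarith [mul_le_mul_of_nonneg_left h1 (by positivity : (0:ℚ) ≤ 2 * P)]
  linarith
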